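/- Uniform bound on the second-level of discretized rough paths under Property (RIE): suppose X : [0,T] → ℝ^d satisfies Property (RIE) relative to p ∈ (2,3) and partitions (P^n), with control function w as in condition (iii). Define 𝕏^n_{s,t} = ∫_s^t (X^n_u − X^n_s) ⊗ dX^n_u (left-point Riemann–Stieltjes sum against the piecewise constant path X^n). Then there is a constant C depending only on p such that ‖𝕏^n‖_{p/2} ≤ C · w(0,T)^{2/p} for every n ∈ ℕ. -/

import Mathlib

open scoped ENNReal Classical
open Filter MeasureTheory ProbabilityTheory

noncomputable section

/-- The `p`-variation of a path `X` over `[0,T]`, as an extended nonnegative real: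
`(sup over partitions of Σ ‖increment‖^p)^(1/p)`. -/
def epVar {E : Type*} [NormedAddCommGroup E] (X : ℝ → E) (p T : ℝ) : ℝ≥0∞ :=
  (⨆ (n : ℕ) (t : ℕ → ℝ) (_ : Monotone t) (_ : t 0 = 0) (_ : t n = T),
    ∑ i ∈ Finset.range n, ENNReal.ofReal (‖X (t (i + 1)) - X (t i)‖ ^ p)) ^ (1 / p)

/-- The `r`-variation of a two-parameter function `A` over `[0,T]`. -/
def epVar2 {E : Type*} [NormedAddCommGroup E] (A : ℝ → ℝ → E) (r T : ℝ) : ℝ≥0∞ :=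
  (⨆ (n : ℕ) (t : ℕ → ℝ) (_ : Monotone t) (_ : t 0 = 0) (_ : t n = T),
    ∑ i ∈ Finset.range n, ENNReal.ofReal (‖A (t i) (t (i + 1))‖ ^ r)) ^ (1 / r)

/-- Piecewise constant approximation of `X` along the partition `t 0 ≤ t 1 ≤ ... ≤ t N`. -/
def pcApprox {E : Type*} (X : ℝ → E) (N : ℕ) (t : ℕ → ℝ) (s : ℝ) : E :=
  X (t (Nat.findGreatest (fun k => t k ≤ s) N))

/-- Tensor (outer) product of two Euclidean vectors, with the Frobenius (Euclidean) norm. -/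
def tp2 {d e : ℕ} (v : EuclideanSpace ℝ (Fin d)) (w : EuclideanSpace ℝ (Fin e)) :
    EuclideanSpace ℝ (Fin d × Fin e) :=
  (WithLp.equiv 2 (Fin d × Fin e → ℝ)).symm (fun q => v q.1 * w q.2)

def tp {d : ℕ} (v w : EuclideanSpace ℝ (Fin d)) : EuclideanSpace ℝ (Fin d × Fin d) :=
  tp2 v w

/-- Clamping of `x` into the interval `[s,u]`. -/
def clamp (s u x : ℝ) : ℝ := max s (min x u)

/-- The second-level lift `𝕏ⁿ_{s,u} = ∫_s^u (Xⁿ_r − Xⁿ_s) ⊗ dXⁿ_r` of a path `Xn` which is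
piecewise constant along the partition `t`, written as a left-point Riemann-Stieltjes sum. -/
def pcLift {d : ℕ} (N : ℕ) (Xn : ℝ → EuclideanSpace ℝ (Fin d)) (t : ℕ → ℝ) (s u : ℝ) :
    EuclideanSpace ℝ (Fin d × Fin d) :=
  ∑ i ∈ Finset.range N,
    tp (Xn (clamp s u (t i)) - Xn s) (Xn (clamp s u (t (i + 1))) - Xn (clamp s u (t i)))

/-- The left-point Riemann sum `∫_0^u Xⁿ_r ⊗ dX_r = Σ_k X_{t_k} ⊗ (X_{t_{k+1}∧u} − X_{t_k∧u})`. -/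
def riemannSum {d : ℕ} (N : ℕ) (X : ℝ → EuclideanSpace ℝ (Fin d)) (t : ℕ → ℝ) (u : ℝ) :
    EuclideanSpace ℝ (Fin d × Fin d) :=
  ∑ k ∈ Finset.range N, tp (X (t k)) (X (min (t (k + 1)) u) - X (min (t k) u))

/-- The left-point Riemann sum `∫_s^u Xⁿ_{s,r} ⊗ dX_r`. -/
def mixedInt {d : ℕ} (N : ℕ) (X : ℝ → EuclideanSpace ℝ (Fin d)) (t : ℕ → ℝ) (s u : ℝ) :
    EuclideanSpace ℝ (Fin d × Fin d) :=
  ∑ i ∈ Finset.range N,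
    tp (pcApprox X N t (clamp s u (t i)) - pcApprox X N t s)
      (X (clamp s u (t (i + 1))) - X (clamp s u (t i)))

/-- A control function on the simplex `Δ_T`: nonnegative and superadditive. -/
def IsControl (T : ℝ) (w : ℝ → ℝ → ℝ) : Prop :=
  (∀ s t, 0 ≤ s → s ≤ t → t ≤ T → 0 ≤ w s t) ∧
  (∀ s u t, 0 ≤ s → s ≤ u → u ≤ t → t ≤ T → w s u + w u t ≤ w s t)

/-- Property (RIE) for a path `X` relative to `p ∈ (2,3)` and a sequence of partitions
`t n 0 ≤ ... ≤ t n (N n)` of `[0,T]` with vanishing mesh. -/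
structure PropertyRIE {d : ℕ} (p T : ℝ) (X : ℝ → EuclideanSpace ℝ (Fin d))
    (N : ℕ → ℕ) (t : ℕ → ℕ → ℝ) : Prop where
  mono : ∀ n, Monotone (t n)
  zero : ∀ n, t n 0 = 0
  top : ∀ n, t n (N n) = T
  mesh : ∀ ε > 0, ∃ m, ∀ n ≥ m, ∀ i < N n, t n (i + 1) - t n i < ε
  unif : TendstoUniformlyOn (fun n s => pcApprox X (N n) (t n) s) X atTop (Set.Icc 0 T)
  riemann : ∃ I : ℝ → EuclideanSpace ℝ (Fin d × Fin d),
    TendstoUniformlyOn (fun n u => riemannSum (N n) X (t n) u) I atTop (Set.Icc 0 T)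
  control : ∃ w : ℝ → ℝ → ℝ, IsControl T w ∧
    (∀ s u, 0 ≤ s → s ≤ u → u ≤ T → ‖X u - X s‖ ^ p ≤ w s u) ∧
    (∀ n, ∀ k ℓ : ℕ, k < ℓ → ℓ ≤ N n →
      ‖riemannSum (N n) X (t n) (t n ℓ) - riemannSum (N n) X (t n) (t n k) -
          tp (X (t n k)) (X (t n ℓ) - X (t n k))‖ ^ (p / 2) ≤ w (t n k) (t n ℓ))

namespace PCLiftAux

variable {d : ℕ}

lemma tp_apply (v w : EuclideanSpace ℝ (Fin d)) (q : Fin d × Fin d) :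
    tp v w q = v q.1 * w q.2 := rfl

lemma tp_zero_left (w : EuclideanSpace ℝ (Fin d)) : tp 0 w = 0 := by
  ext q; simp [tp_apply]

lemma tp_zero_right (v : EuclideanSpace ℝ (Fin d)) : tp v 0 = 0 := by
  ext q; simp [tp_apply]

lemma tp_sub_left (a b c : EuclideanSpace ℝ (Fin d)) : tp (a - b) c = tp a c - tp b c := by
  ext q; simp [tp_apply, sub_mul]

lemma tp_sub_right (a b c : EuclideanSpace ℝ (Fin d)) : tp a (b - c) = tp a b - tp a c := by
  ext q; simp [tp_apply, mul_sub]

lemma tp_add_right (a b c : EuclideanSpace ℝ (Fin d)) : tp a (b + c) = tp a b + tp a c := by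
  ext q; simp [tp_apply, mul_add]

lemma tp_sum_right {ι : Type*} (F : Finset ι) (a : EuclideanSpace ℝ (Fin d))
    (g : ι → EuclideanSpace ℝ (Fin d)) : tp a (∑ i ∈ F, g i) = ∑ i ∈ F, tp a (g i) :=
  map_sum (AddMonoidHom.mk' (tp a) (tp_add_right a)) g F

lemma tp_norm (v w : EuclideanSpace ℝ (Fin d)) : ‖tp v w‖ = ‖v‖ * ‖w‖ := by
  rw [EuclideanSpace.norm_eq, EuclideanSpace.norm_eq, EuclideanSpace.norm_eq,
    ← Real.sqrt_mul (by positivity)]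
  congr 1
  rw [Fintype.sum_prod_type, Finset.sum_mul_sum]
  simp [tp_apply, mul_pow, norm_mul, mul_comm]

lemma pcApprox_partition {X : ℝ → EuclideanSpace ℝ (Fin d)} {M : ℕ} {τ : ℕ → ℝ}
    (hmono : Monotone τ) {j : ℕ} (hj : j ≤ M) : pcApprox X M τ (τ j) = X (τ j) := by
  have h1 : j ≤ Nat.findGreatest (fun k => τ k ≤ τ j) M := Nat.le_findGreatest hj le_rfl
  have h2 : τ (Nat.findGreatest (fun k => τ k ≤ τ j) M) ≤ τ j :=
    Nat.findGreatest_spec (P := fun k => τ k ≤ τ j) hj le_rfl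
  unfold pcApprox
  exact congrArg X (le_antisymm h2 (hmono h1))

/-- Key structural identity for `pcLift` of the piecewise-constant path. -/
lemma pcLift_eq (X : ℝ → EuclideanSpace ℝ (Fin d)) (M : ℕ) (τ : ℕ → ℝ)
    (hmono : Monotone τ) (hzero : τ 0 = 0) {s u : ℝ} (hs : 0 ≤ s) (hsu : s ≤ u) :
    pcLift M (pcApprox X M τ) τ s u =
      ∑ i ∈ Finset.Ioo (Nat.findGreatest (fun k => τ k ≤ s) M)
          (Nat.findGreatest (fun k => τ k ≤ u) M),
        tp (X (τ i) - X (τ (Nat.findGreatest (fun k => τ k ≤ s) M)))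
          (X (τ (i + 1)) - X (τ i)) := by
  set k := Nat.findGreatest (fun j => τ j ≤ s) M with hk
  set ℓ := Nat.findGreatest (fun j => τ j ≤ u) M with hℓ
  have hu : 0 ≤ u := hs.trans hsu
  have hτk : τ k ≤ s :=
    Nat.findGreatest_spec (P := fun j => τ j ≤ s) (Nat.zero_le M) (show τ 0 ≤ s by rw [hzero]; exact hs)
  have hτℓ : τ ℓ ≤ u :=
    Nat.findGreatest_spec (P := fun j => τ j ≤ u) (Nat.zero_le M) (show τ 0 ≤ u by rw [hzero]; exact hu)
  have hkM : k ≤ M := Nat.findGreatest_le M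
  have hℓM : ℓ ≤ M := Nat.findGreatest_le M
  have hgt_s : ∀ j, k < j → j ≤ M → s < τ j := fun j h1 h2 =>
    lt_of_not_ge (Nat.findGreatest_is_greatest h1 h2)
  have hgt_u : ∀ j, ℓ < j → j ≤ M → u < τ j := fun j h1 h2 =>
    lt_of_not_ge (Nat.findGreatest_is_greatest h1 h2)
  have hc_le : ∀ x, x ≤ s → clamp s u x = s := fun x hx => by
    unfold clamp; rw [min_eq_left (hx.trans hsu), max_eq_left hx]
  have hc_mid : ∀ x, s ≤ x → x ≤ u → clamp s u x = x := fun x h1 h2 => by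
    unfold clamp; rw [min_eq_left h2, max_eq_right h1]
  have hc_ge : ∀ x, u ≤ x → clamp s u x = u := fun x hx => by
    unfold clamp; rw [min_eq_right hx, max_eq_right hsu]
  have hXns : pcApprox X M τ s = X (τ k) := rfl
  have hXnu : pcApprox X M τ u = X (τ ℓ) := rfl
  have key : ∀ i ∈ Finset.range M,
      tp (pcApprox X M τ (clamp s u (τ i)) - pcApprox X M τ s)
        (pcApprox X M τ (clamp s u (τ (i + 1))) - pcApprox X M τ (clamp s u (τ i))) =
      if i ∈ Finset.Ioo k ℓ then
        tp (X (τ i) - X (τ k)) (X (τ (i + 1)) - X (τ i)) else 0 := by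
    intro i hi
    have hiM : i < M := Finset.mem_range.mp hi
    by_cases hik : i ≤ k
    · rw [if_neg (fun h => absurd (Finset.mem_Ioo.mp h).1 (not_lt.mpr hik))]
      rw [hc_le (τ i) ((hmono hik).trans hτk), hXns, sub_self, tp_zero_left]
    · push_neg at hik
      by_cases hiℓ : i < ℓ
      · rw [if_pos (Finset.mem_Ioo.mpr ⟨hik, hiℓ⟩)]
        have hi1ℓ : i + 1 ≤ ℓ := hiℓ
        have hsi : s < τ i := hgt_s i hik (hiM.le)
        have hui : τ i ≤ u := (hmono hiℓ.le).trans hτℓ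
        have hui1 : τ (i + 1) ≤ u := (hmono hi1ℓ).trans hτℓ
        rw [hc_mid (τ i) hsi.le hui,
          hc_mid (τ (i + 1)) (hsi.le.trans (hmono (Nat.le_succ i))) hui1,
          pcApprox_partition hmono hiM.le, pcApprox_partition hmono (hi1ℓ.trans hℓM), hXns]
      · push_neg at hiℓ
        rw [if_neg (fun h => absurd (Finset.mem_Ioo.mp h).2 (not_lt.mpr hiℓ))]
        have hci1 : clamp s u (τ (i + 1)) = u :=
          hc_ge _ (hgt_u (i + 1) (Nat.lt_succ_of_le hiℓ) hiM).le
        have hXci : pcApprox X M τ (clamp s u (τ i)) = X (τ ℓ) := by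
          rcases eq_or_lt_of_le hiℓ with h | h
          · rw [hc_mid (τ i) (hgt_s i hik hiM.le).le (h ▸ hτℓ),
              pcApprox_partition hmono hiM.le, ← h]
          · rw [hc_ge _ (hgt_u i h hiM.le).le, hXnu]
        rw [hci1, hXci, hXnu, sub_self, tp_zero_right]
  unfold pcLift
  rw [Finset.sum_congr rfl key, Finset.sum_ite_mem,
    Finset.inter_eq_right.mpr (fun i hi => Finset.mem_range.mpr
      (lt_of_lt_of_le (Finset.mem_Ioo.mp hi).2 hℓM))]

lemma riemannSum_diff (X : ℝ → EuclideanSpace ℝ (Fin d)) (M : ℕ) (τ : ℕ → ℝ)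
    (hmono : Monotone τ) {a b : ℕ} (hab : a ≤ b) (hbM : b ≤ M) :
    riemannSum M X τ (τ b) - riemannSum M X τ (τ a) =
      ∑ i ∈ Finset.Ico a b, tp (X (τ i)) (X (τ (i + 1)) - X (τ i)) := by
  unfold riemannSum
  rw [← Finset.sum_sub_distrib]
  have key : ∀ i ∈ Finset.range M,
      tp (X (τ i)) (X (min (τ (i + 1)) (τ b)) - X (min (τ i) (τ b))) -
        tp (X (τ i)) (X (min (τ (i + 1)) (τ a)) - X (min (τ i) (τ a))) =
      if i ∈ Finset.Ico a b then
        tp (X (τ i)) (X (τ (i + 1)) - X (τ i)) else 0 := by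
    intro i hi
    rcases lt_or_ge i a with h1 | h1
    · rw [if_neg (fun h => absurd (Finset.mem_Ico.mp h).1 (not_le.mpr h1))]
      rw [min_eq_left (hmono (h1.le.trans hab)),
        min_eq_left (hmono (Nat.succ_le_of_lt (lt_of_lt_of_le h1 hab))),
        min_eq_left (hmono h1.le), min_eq_left (hmono h1), sub_self]
    · rcases lt_or_ge i b with h2 | h2
      · rw [if_pos (Finset.mem_Ico.mpr ⟨h1, h2⟩)]
        rw [min_eq_left (hmono h2.le), min_eq_left (hmono h2), min_eq_right (hmono h1),
          min_eq_right (hmono (h1.trans (Nat.le_succ i))), sub_self, tp_zero_right, sub_zero]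
      · rw [if_neg (fun h => absurd (Finset.mem_Ico.mp h).2 (not_lt.mpr h2))]
        rw [min_eq_right (hmono h2), min_eq_right (hmono (h2.trans (Nat.le_succ i))),
          min_eq_right (hmono (hab.trans h2)),
          min_eq_right (hmono ((hab.trans h2).trans (Nat.le_succ i)))]
        simp [tp_zero_right]
  rw [Finset.sum_congr rfl key, Finset.sum_ite_mem,
    Finset.inter_eq_right.mpr (fun i hi => Finset.mem_range.mpr
      (lt_of_lt_of_le (Finset.mem_Ico.mp hi).2 hbM))]

lemma le_rpow_of_rpow_le {a b q r : ℝ} (ha : 0 ≤ a) (hqr : q * r = 1) (hr0 : 0 ≤ r)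
    (h : a ^ q ≤ b) : a ≤ b ^ r := by
  have h1 : a = (a ^ q) ^ r := by rw [← Real.rpow_mul ha, hqr, Real.rpow_one]
  rw [h1]
  exact Real.rpow_le_rpow (Real.rpow_nonneg ha q) h hr0

lemma control_chain {T : ℝ} {w : ℝ → ℝ → ℝ} (hw : IsControl T w) (a : ℕ → ℝ)
    (ha : Monotone a) (h0 : 0 ≤ a 0) (hT : ∀ j, a j ≤ T) (m : ℕ) :
    ∑ j ∈ Finset.range m, w (a j) (a (j + 1)) ≤ w 0 T := by
  have key : ∀ m', ∑ j ∈ Finset.range m', w (a j) (a (j + 1)) ≤ w (a 0) (a m') := by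
    intro m'
    induction m' with
    | zero => simpa using hw.1 (a 0) (a 0) h0 le_rfl (hT 0)
    | succ m' ih =>
      rw [Finset.sum_range_succ]
      have h2 := hw.2 (a 0) (a m') (a (m' + 1)) h0 (ha (Nat.zero_le m'))
        (ha (Nat.le_succ m')) (hT (m' + 1))
      linarith
  have h0m : 0 ≤ a m := le_trans h0 (ha (Nat.zero_le m))
  have h1 := hw.2 0 (a 0) (a m) le_rfl h0 (ha (Nat.zero_le m)) (hT m)
  have h2 := hw.2 0 (a m) T le_rfl h0m (hT m) le_rfl
  have h3 := hw.1 0 (a 0) le_rfl h0 (hT 0)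
  have h4 := hw.1 (a m) T h0m (hT m) le_rfl
  have h5 := key m
  linarith

/-- The per-interval estimate on the second-level lift. -/
lemma pcLift_norm_le {p T : ℝ} (hp2 : 2 < p) (X : ℝ → EuclideanSpace ℝ (Fin d)) (M : ℕ)
    (τ : ℕ → ℝ) (hmono : Monotone τ) (hzero : τ 0 = 0) (htop : τ M = T)
    {w : ℝ → ℝ → ℝ} (hw : IsControl T w)
    (hX : ∀ s u, 0 ≤ s → s ≤ u → u ≤ T → ‖X u - X s‖ ^ p ≤ w s u)
    (hR : ∀ k ℓ : ℕ, k < ℓ → ℓ ≤ M →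
      ‖riemannSum M X τ (τ ℓ) - riemannSum M X τ (τ k) -
        tp (X (τ k)) (X (τ ℓ) - X (τ k))‖ ^ (p / 2) ≤ w (τ k) (τ ℓ))
    {s u : ℝ} (hs : 0 ≤ s) (hsu : s ≤ u) :
    ‖pcLift M (pcApprox X M τ) τ s u‖ ≤
      2 * w (τ (Nat.findGreatest (fun k => τ k ≤ s) M))
          (τ (Nat.findGreatest (fun k => τ k ≤ u) M)) ^ (2 / p) := by
  have hp0 : (0 : ℝ) < p := by linarith
  set k := Nat.findGreatest (fun j => τ j ≤ s) M with hk
  set ℓ := Nat.findGreatest (fun j => τ j ≤ u) M with hℓ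
  have hu : 0 ≤ u := hs.trans hsu
  have hτk : τ k ≤ s :=
    Nat.findGreatest_spec (P := fun j => τ j ≤ s) (Nat.zero_le M) (show τ 0 ≤ s by rw [hzero]; exact hs)
  have hτℓ : τ ℓ ≤ u :=
    Nat.findGreatest_spec (P := fun j => τ j ≤ u) (Nat.zero_le M) (show τ 0 ≤ u by rw [hzero]; exact hu)
  have hkM : k ≤ M := Nat.findGreatest_le M
  have hℓM : ℓ ≤ M := Nat.findGreatest_le M
  have hkℓ : k ≤ ℓ := by
    by_contra hcon
    push_neg at hcon
    exact absurd (hτk.trans hsu)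
      (Nat.findGreatest_is_greatest (P := fun j => τ j ≤ u) hcon hkM)
  have h0k : 0 ≤ τ k := by rw [← hzero]; exact hmono (Nat.zero_le k)
  have hklτ : τ k ≤ τ ℓ := hmono hkℓ
  have hℓT : τ ℓ ≤ T := by rw [← htop]; exact hmono hℓM
  have hW0 : 0 ≤ w (τ k) (τ ℓ) := hw.1 _ _ h0k hklτ hℓT
  have hW2p : 0 ≤ w (τ k) (τ ℓ) ^ (2 / p) := Real.rpow_nonneg hW0 _
  rw [pcLift_eq X M τ hmono hzero hs hsu, ← hk, ← hℓ]
  by_cases hc : k + 1 < ℓ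
  · have hk1ℓ : k + 1 ≤ ℓ := hc.le
    have h0k1 : 0 ≤ τ (k + 1) := by rw [← hzero]; exact hmono (Nat.zero_le _)
    have hkk1 : τ k ≤ τ (k + 1) := hmono (Nat.le_succ k)
    have hk1ℓτ : τ (k + 1) ≤ τ ℓ := hmono hk1ℓ
    have hk1T : τ (k + 1) ≤ T := hk1ℓτ.trans hℓT
    have hsplit := hw.2 (τ k) (τ (k + 1)) (τ ℓ) h0k hkk1 hk1ℓτ hℓT
    have hw1 : 0 ≤ w (τ k) (τ (k + 1)) := hw.1 _ _ h0k hkk1 hk1T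
    have hw2 : 0 ≤ w (τ (k + 1)) (τ ℓ) := hw.1 _ _ h0k1 hk1ℓτ hℓT
    have hwb : w (τ (k + 1)) (τ ℓ) ≤ w (τ k) (τ ℓ) := by linarith
    have hwa : w (τ k) (τ (k + 1)) ≤ w (τ k) (τ ℓ) := by linarith
    have e1 : ∑ i ∈ Finset.Ioo k ℓ, tp (X (τ i) - X (τ k)) (X (τ (i + 1)) - X (τ i)) =
        (riemannSum M X τ (τ ℓ) - riemannSum M X τ (τ (k + 1)) -
          tp (X (τ (k + 1))) (X (τ ℓ) - X (τ (k + 1)))) +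
        tp (X (τ (k + 1)) - X (τ k)) (X (τ ℓ) - X (τ (k + 1))) := by
      rw [← Finset.Ico_add_one_left_eq_Ioo]
      have t1 : ∑ i ∈ Finset.Ico (k + 1) ℓ, tp (X (τ i) - X (τ k)) (X (τ (i + 1)) - X (τ i)) =
          ∑ i ∈ Finset.Ico (k + 1) ℓ, tp (X (τ i)) (X (τ (i + 1)) - X (τ i)) -
          ∑ i ∈ Finset.Ico (k + 1) ℓ, tp (X (τ k)) (X (τ (i + 1)) - X (τ i)) := by
        rw [← Finset.sum_sub_distrib]
        exact Finset.sum_congr rfl fun i _ => tp_sub_left _ _ _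
      have t2 : ∑ i ∈ Finset.Ico (k + 1) ℓ, (X (τ (i + 1)) - X (τ i)) =
          X (τ ℓ) - X (τ (k + 1)) := by
        rw [Finset.sum_Ico_eq_sub _ hk1ℓ, Finset.sum_range_sub (fun i => X (τ i)),
          Finset.sum_range_sub (fun i => X (τ i))]
        abel
      rw [t1, ← tp_sum_right, t2, ← riemannSum_diff X M τ hmono hk1ℓ hℓM,
        tp_sub_left (X (τ (k + 1))) (X (τ k)) (X (τ ℓ) - X (τ (k + 1)))]
      abel
    rw [e1]
    refine le_trans (norm_add_le _ _) ?_
    have hRb : ‖riemannSum M X τ (τ ℓ) - riemannSum M X τ (τ (k + 1)) -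
        tp (X (τ (k + 1))) (X (τ ℓ) - X (τ (k + 1)))‖ ≤ w (τ k) (τ ℓ) ^ (2 / p) := by
      refine le_trans (le_rpow_of_rpow_le (norm_nonneg _)
        (show (p / 2) * (2 / p) = 1 by field_simp) (by positivity)
        (hR (k + 1) ℓ hc hℓM)) ?_
      exact Real.rpow_le_rpow hw2 hwb (by positivity)
    have hEb : ‖tp (X (τ (k + 1)) - X (τ k)) (X (τ ℓ) - X (τ (k + 1)))‖ ≤
        w (τ k) (τ ℓ) ^ (2 / p) := by
      rw [tp_norm]
      have hx1 : ‖X (τ (k + 1)) - X (τ k)‖ ≤ w (τ k) (τ ℓ) ^ (1 / p) := by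
        refine le_trans (le_rpow_of_rpow_le (norm_nonneg _)
          (show p * (1 / p) = 1 by field_simp) (by positivity)
          (hX (τ k) (τ (k + 1)) h0k hkk1 hk1T)) ?_
        exact Real.rpow_le_rpow hw1 hwa (by positivity)
      have hx2 : ‖X (τ ℓ) - X (τ (k + 1))‖ ≤ w (τ k) (τ ℓ) ^ (1 / p) := by
        refine le_trans (le_rpow_of_rpow_le (norm_nonneg _)
          (show p * (1 / p) = 1 by field_simp) (by positivity)
          (hX (τ (k + 1)) (τ ℓ) h0k1 hk1ℓτ hℓT)) ?_
        exact Real.rpow_le_rpow hw2 hwb (by positivity)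
      have := mul_le_mul hx1 hx2 (norm_nonneg _) (Real.rpow_nonneg hW0 _)
      refine le_trans this (le_of_eq ?_)
      rw [← Real.rpow_add' hW0 (by positivity)]
      norm_num
      ring_nf
    linarith
  · have hempty : Finset.Ioo k ℓ = ∅ := by
      rw [← Finset.Ico_add_one_left_eq_Ioo]
      exact Finset.Ico_eq_empty (by omega)
    rw [hempty, Finset.sum_empty, norm_zero]
    positivity

end PCLiftAux

open PCLiftAux in
/-- under Property (RIE) with control function `w`, the second-level lifts
`𝕏ⁿ` of the discretized paths satisfy `‖𝕏ⁿ‖_{p/2} ≤ C w(0,T)^{2/p}` uniformly in `n`, with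
`C` depending only on `p`. -/

theorem pcLift_pvar_bound (p : ℝ) (hp2 : 2 < p) (hp3 : p < 3) :
    ∃ C : ℝ, 0 < C ∧
      ∀ (d : ℕ) (T : ℝ) (X : ℝ → EuclideanSpace ℝ (Fin d)) (N : ℕ → ℕ) (t : ℕ → ℕ → ℝ)
        (w : ℝ → ℝ → ℝ), 0 < T →
        PropertyRIE p T X N t →
        IsControl T w →
        (∀ s u, 0 ≤ s → s ≤ u → u ≤ T → ‖X u - X s‖ ^ p ≤ w s u) →
        (∀ n, ∀ k ℓ : ℕ, k < ℓ → ℓ ≤ N n →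
          ‖riemannSum (N n) X (t n) (t n ℓ) - riemannSum (N n) X (t n) (t n k) -
              tp (X (t n k)) (X (t n ℓ) - X (t n k))‖ ^ (p / 2) ≤ w (t n k) (t n ℓ)) →
        ∀ n, epVar2 (fun s u => pcLift (N n) (pcApprox X (N n) (t n)) (t n) s u) (p / 2) T ≤
          ENNReal.ofReal (C * w 0 T ^ (2 / p)) := by
  have hp0 : (0 : ℝ) < p := by linarith
  have hph : (0 : ℝ) < p / 2 := by linarith
  refine ⟨2, by norm_num, ?_⟩
  intro d T X N t w hT hRIE hw hX hR n
  have hmono := hRIE.mono n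
  have hzero := hRIE.zero n
  have htop := hRIE.top n
  have hw0T : 0 ≤ w 0 T := hw.1 0 T le_rfl hT.le le_rfl
  have hSb : (⨆ (m : ℕ) (σ : ℕ → ℝ) (_ : Monotone σ) (_ : σ 0 = 0) (_ : σ m = T),
      ∑ j ∈ Finset.range m, ENNReal.ofReal
        (‖pcLift (N n) (pcApprox X (N n) (t n)) (t n) (σ j) (σ (j + 1))‖ ^ (p / 2))) ≤
      ENNReal.ofReal (2 ^ (p / 2) * w 0 T) := by
    refine iSup_le fun m => iSup_le fun σ => iSup_le fun hσm => iSup_le fun hσ0 =>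
      iSup_le fun hσT => ?_
    set a : ℕ → ℝ := fun j => t n (Nat.findGreatest (fun i => t n i ≤ σ j) (N n)) with ha
    have hσ_nonneg : ∀ j, 0 ≤ σ j := fun j => by rw [← hσ0]; exact hσm (Nat.zero_le j)
    have haT : ∀ j, a j ≤ T := fun j => by
      rw [← htop]; exact hmono (Nat.findGreatest_le (N n))
    have ha0 : ∀ j, 0 ≤ a j := fun j => by rw [← hzero]; exact hmono (Nat.zero_le _)
    have hamono : Monotone a := by
      intro i j hij
      have hfg : Nat.findGreatest (fun i' => t n i' ≤ σ i) (N n) ≤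
          Nat.findGreatest (fun i' => t n i' ≤ σ j) (N n) := by
        by_contra hcon
        push_neg at hcon
        refine Nat.findGreatest_is_greatest (P := fun i' => t n i' ≤ σ j) hcon
          (Nat.findGreatest_le (N n)) ?_
        exact le_trans (Nat.findGreatest_spec (P := fun i' => t n i' ≤ σ i) (Nat.zero_le (N n))
          (show t n 0 ≤ σ i by rw [hzero]; exact hσ_nonneg i)) (hσm hij)
      exact hmono hfg
    have hterm : ∀ j ∈ Finset.range m,
        ‖pcLift (N n) (pcApprox X (N n) (t n)) (t n) (σ j) (σ (j + 1))‖ ^ (p / 2) ≤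
        2 ^ (p / 2) * w (a j) (a (j + 1)) := by
      intro j _
      have hwj : 0 ≤ w (a j) (a (j + 1)) :=
        hw.1 _ _ (ha0 j) (hamono (Nat.le_succ j)) (haT (j + 1))
      have hb := pcLift_norm_le hp2 X (N n) (t n) hmono hzero htop hw hX (hR n)
        (hσ_nonneg j) (hσm (Nat.le_succ j))
      calc ‖pcLift (N n) (pcApprox X (N n) (t n)) (t n) (σ j) (σ (j + 1))‖ ^ (p / 2) ≤
          (2 * w (a j) (a (j + 1)) ^ (2 / p)) ^ (p / 2) :=
            Real.rpow_le_rpow (norm_nonneg _) hb hph.le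
        _ = 2 ^ (p / 2) * w (a j) (a (j + 1)) := by
            rw [Real.mul_rpow (by norm_num) (Real.rpow_nonneg hwj _),
              ← Real.rpow_mul hwj, show (2 / p) * (p / 2) = 1 by field_simp, Real.rpow_one]
    rw [← ENNReal.ofReal_sum_of_nonneg
      (fun j _ => Real.rpow_nonneg (norm_nonneg _) _)]
    refine ENNReal.ofReal_le_ofReal ?_
    refine le_trans (Finset.sum_le_sum hterm) ?_
    rw [← Finset.mul_sum]
    exact mul_le_mul_of_nonneg_left (control_chain hw a hamono (ha0 0) haT m)
      (by positivity)
  have hfin := ENNReal.rpow_le_rpow hSb (le_of_lt (by positivity : (0 : ℝ) < 1 / (p / 2)))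
  refine le_trans hfin (le_of_eq ?_)
  rw [ENNReal.ofReal_rpow_of_nonneg (by positivity) (by positivity)]
  congr 1
  rw [one_div_div, Real.mul_rpow (by positivity) hw0T,
    ← Real.rpow_mul (by norm_num : (0:ℝ) ≤ 2), show (p / 2) * (2 / p) = 1 by field_simp,
    Real.rpow_one]
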